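/- arXiv:1308.0042 — 5 statements merged into one kernel-verified Lean document; each statement's English description precedes it below -/
import Mathlib

section
/- In the tropical semiring T = (ℝ ∪ {-∞}, max, +), for any r in the closed interval [t₁, t₂] ⊆ ℝ, the identity (t₁ - r) + b_{t₁} ⊕ b_{t₂} = b_r holds in the quotient semiring of functions, where b_t(x) = max(0, x - t); that is, for all x ∈ T: max(t₁ - r + max(0, x - t₁), max(0, x - t₂)) = max(0, x - r). -/
/-- In the tropical semiring, for `t₁ ≤ r ≤ t₂` one has
`(t₁ - r) ⊙ b_{t₁} ⊕ b_{t₂} = b_r` pointwise, where `b_t(x) = max 0 (x - t)`. -/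
theorem stmt10 (t₁ t₂ r x : ℝ) (h1 : t₁ ≤ r) (h2 : r ≤ t₂) :
    max (t₁ - r + max 0 (x - t₁)) (max 0 (x - t₂)) = max 0 (x - r) := by
  rcases le_total x r with h | h <;> rcases le_total x t₁ with h' | h' <;>
    rcases le_total x t₂ with h'' | h'' <;>
    simp [max_eq_left, max_eq_right, *] <;>
    first
      | linarith
      | (rw [max_eq_left (by linarith)]; linarith)
end

section
/- Let S be an idempotent commutative semiring, M a commutative monoid (viewed as monomials), and f ∈ M-indexed finitely supported functions to S (i.e., the monoid semiring S[M]). For a unit λ ∈ S, the bend congruence of λf equals the bend congruence of f: the S-module congruence generated by the relations {λf ∼ (λf) with the a-term deleted : a ∈ supp(f)} equals that generated by {f ∼ f with the a-term deleted : a ∈ supp(f)}. -/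
/-- A module congruence on an `S`-module `N`: an equivalence relation closed under
addition and scalar multiplication. -/
def IsModCong (S N : Type*) [Semiring S] [AddCommMonoid N] [Module S N]
    (r : N → N → Prop) : Prop :=
  Equivalence r ∧ (∀ a b c d : N, r a b → r c d → r (a + c) (b + d)) ∧
    (∀ (s : S) (a b : N), r a b → r (s • a) (s • b))

/-- The module congruence generated by a set of pairs. -/
def modCongGen (S N : Type*) [Semiring S] [AddCommMonoid N] [Module S N]
    (p : N → N → Prop) : N → N → Prop :=
  fun x y => ∀ r : N → N → Prop, IsModCong S N r → (∀ a b, p a b → r a b) → r x y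

/-- The bend relations of `f ∈ M ⊗ S`: `f ∼ f_â` for each `a ∈ supp f`, where `f_â`
is `f` with the `a`-term deleted. -/
def bendPairs {S M : Type*} [Zero S] (f : M →₀ S) : (M →₀ S) → (M →₀ S) → Prop :=
  fun x y => ∃ a ∈ f.support, x = f ∧ y = Finsupp.erase a f

lemma isModCong_gen (S N : Type*) [Semiring S] [AddCommMonoid N] [Module S N]
    (p : N → N → Prop) : IsModCong S N (modCongGen S N p) := by
  refine ⟨⟨fun x r hr _ => hr.1.refl x,
          fun h r hr hp => hr.1.symm (h r hr hp),
          fun h1 h2 r hr hp => hr.1.trans (h1 r hr hp) (h2 r hr hp)⟩,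
         fun a b c d h1 h2 r hr hp => hr.2.1 a b c d (h1 r hr hp) (h2 r hr hp),
         fun s a b h r hr hp => hr.2.2 s a b (h r hr hp)⟩

lemma modCongGen_le (S N : Type*) [Semiring S] [AddCommMonoid N] [Module S N]
    (p q : N → N → Prop) (h : ∀ a b, p a b → modCongGen S N q a b) :
    ∀ a b, modCongGen S N p a b → modCongGen S N q a b :=
  fun _ _ hab => hab _ (isModCong_gen S N q) h

lemma support_smul_unit {S M : Type*} [CommSemiring S] (f : M →₀ S) {lam : S}
    (hl : IsUnit lam) : (lam • f).support = f.support := by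
  ext a
  simp only [Finsupp.mem_support_iff, Finsupp.smul_apply, smul_eq_mul]
  constructor
  · intro h hf; exact h (by rw [hf, mul_zero])
  · intro h hz
    obtain ⟨u, rfl⟩ := hl
    have := congrArg (fun x => ((u⁻¹ : Sˣ) : S) * x) hz
    simp only [← mul_assoc, Units.inv_mul, one_mul, mul_zero] at this
    exact h this

lemma erase_smul' {S M : Type*} [CommSemiring S] (a : M) (lam : S) (f : M →₀ S) :
    Finsupp.erase a (lam • f) = lam • Finsupp.erase a f := by
  ext b
  by_cases h : b = a <;> simp [Finsupp.erase, h]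

/-- For a unit `λ ∈ S`, the bend congruence of `λ • f` equals the bend congruence
of `f`. -/
theorem stmt13 (S M : Type*) [CommSemiring S] (hidem : ∀ s : S, s + s = s)
    (f : M →₀ S) (lam : S) (hl : IsUnit lam) :
    modCongGen S (M →₀ S) (bendPairs (lam • f)) = modCongGen S (M →₀ S) (bendPairs f) := by
  obtain ⟨u, hu⟩ := hl
  funext x y
  apply propext
  constructor
  · apply modCongGen_le
    rintro x y ⟨m, hm, rfl, rfl⟩
    rw [support_smul_unit f ⟨u, hu⟩] at hm
    rw [erase_smul']
    intro r hr hp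
    exact hr.2.2 lam _ _ (hp _ _ ⟨m, hm, rfl, rfl⟩)
  · apply modCongGen_le
    rintro x y ⟨m, hm, rfl, rfl⟩
    intro r hr hp
    have h1 : r (lam • x) (Finsupp.erase m (lam • x)) :=
      hp _ _ ⟨m, by rw [support_smul_unit x ⟨u, hu⟩]; exact hm, rfl, rfl⟩
    have h2 := hr.2.2 ((u⁻¹ : Sˣ) : S) _ _ h1
    rw [erase_smul'] at h2
    have e : ((u⁻¹ : Sˣ) : S) • lam • x = x := by
      rw [smul_smul, ← hu, Units.inv_mul, one_smul]
    have e2 : ((u⁻¹ : Sˣ) : S) • lam • Finsupp.erase m x = Finsupp.erase m x := by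
      rw [smul_smul, ← hu, Units.inv_mul, one_smul]
    rw [e, e2] at h2
    exact h2
end

section
/- Let S be an idempotent semifield and M a finite pointed set. If f, g ∈ M⊗S are nonzero elements with B(f) = B(g) as module congruences on the free S-module M⊗S, then g = λf for some unit λ ∈ S. -/
section Aux

variable {S M : Type*} [CommSemiring S] [Fintype M]

private lemma funIsCong (c : M → S) :
    IsModCong S (M →₀ S) (fun x y => ∑ m, c m * x m = ∑ m, c m * y m) := by
  refine ⟨⟨fun _ => rfl, Eq.symm, Eq.trans⟩, ?_, ?_⟩
  · intro a b x y hab hxy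
    simp only [Finsupp.add_apply, mul_add, Finset.sum_add_distrib, hab, hxy]
  · intro s a b hab
    have key : ∀ x : M →₀ S, ∑ m, c m * (s • x) m = s * ∑ m, c m * x m := by
      intro x
      rw [Finset.mul_sum]
      refine Finset.sum_congr rfl fun m _ => ?_
      simp only [Finsupp.smul_apply, smul_eq_mul]
      ring
    rw [key, key, hab]

private lemma keyTransfer (f g : M →₀ S)
    (h : modCongGen S (M →₀ S) (bendPairs f) = modCongGen S (M →₀ S) (bendPairs g))
    (c : M → S) (hc : ∀ a ∈ f.support, ∑ m, c m * f m = ∑ m, c m * (f.erase a) m) :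
    ∀ a ∈ g.support, ∑ m, c m * g m = ∑ m, c m * (g.erase a) m := by
  intro a ha
  have hgen : modCongGen S (M →₀ S) (bendPairs g) g (g.erase a) :=
    fun r _ hp => hp _ _ ⟨a, ha, rfl, rfl⟩
  rw [← h] at hgen
  exact hgen _ (funIsCong c) (by rintro x y ⟨b, hb, rfl, rfl⟩; exact hc b hb)

private lemma suppSub (f g : M →₀ S)
    (h : modCongGen S (M →₀ S) (bendPairs f) = modCongGen S (M →₀ S) (bendPairs g)) :
    ∀ k, g k ≠ 0 → f k ≠ 0 := by
  classical
  intro k hk hfk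
  set c : M → S := fun m => if m = k then 1 else 0 with hc_def
  have hcomp : ∀ x : M →₀ S, ∑ m, c m * x m = x k := by
    intro x
    simp [hc_def, ite_mul, Finset.sum_ite_eq']
  have hc : ∀ a ∈ f.support, ∑ m, c m * f m = ∑ m, c m * (f.erase a) m := by
    intro a _
    rw [hcomp, hcomp, hfk]
    by_cases hak : k = a
    · simp [hak]
    · rw [Finsupp.erase_ne hak, hfk]
  have := keyTransfer f g h c hc k (Finsupp.mem_support_iff.2 hk)
  rw [hcomp, hcomp, Finsupp.erase_same] at this
  exact hk this

private lemma ratioEq (hidem : ∀ s : S, s + s = s) (f g : M →₀ S)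
    (h : modCongGen S (M →₀ S) (bendPairs f) = modCongGen S (M →₀ S) (bendPairs g))
    (i j : M) (hij : i ≠ j) (hfi : f i ≠ 0) (hfj : f j ≠ 0)
    (hgi : g i ≠ 0) (hgj : g j ≠ 0)
    (fi' fj' : S) (hfi' : f i * fi' = 1) (hfj' : f j * fj' = 1) :
    fi' * g i = fj' * g j := by
  classical
  set c : M → S := fun m => (if m = i then fi' else 0) + (if m = j then fj' else 0) with hc_def
  have hcomp : ∀ x : M →₀ S, ∑ m, c m * x m = fi' * x i + fj' * x j := by
    intro x
    simp [hc_def, add_mul, Finset.sum_add_distrib, ite_mul, Finset.sum_ite_eq']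
  have h1 : fi' * f i = 1 := by rw [mul_comm]; exact hfi'
  have h2 : fj' * f j = 1 := by rw [mul_comm]; exact hfj'
  have hc : ∀ a ∈ f.support, ∑ m, c m * f m = ∑ m, c m * (f.erase a) m := by
    intro a _
    rw [hcomp, hcomp, h1]
    by_cases hai : i = a
    · rw [← hai, Finsupp.erase_same, Finsupp.erase_ne (Ne.symm hij), h2, mul_zero,
        zero_add]
      exact hidem 1
    · rw [Finsupp.erase_ne hai, h1]
      by_cases haj : j = a
      · rw [← haj, Finsupp.erase_same, mul_zero, add_zero, h2]
        exact hidem 1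
      · rw [Finsupp.erase_ne haj, h2]
  have key := keyTransfer f g h c hc
  have e1 := key i (Finsupp.mem_support_iff.2 hgi)
  have e2 := key j (Finsupp.mem_support_iff.2 hgj)
  rw [hcomp, hcomp, Finsupp.erase_same, Finsupp.erase_ne (Ne.symm hij), mul_zero, zero_add]
    at e1
  rw [hcomp, hcomp, Finsupp.erase_same, Finsupp.erase_ne hij, mul_zero, add_zero] at e2
  exact e2.symm.trans e1

end Aux

/-- Over an idempotent semifield `S` and a finite pointed set of monomials `M`,
two nonzero elements of the free module `M ⊗ S` with equal bend congruences differ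
by a unit scalar. -/
theorem stmt16 (S M : Type*) [CommSemiring S] [Fintype M]
    (hidem : ∀ s : S, s + s = s)
    (hinv : ∀ a : S, a ≠ 0 → ∃ b : S, a * b = 1)
    (f g : M →₀ S) (hf : f ≠ 0) (hg : g ≠ 0)
    (h : modCongGen S (M →₀ S) (bendPairs f) = modCongGen S (M →₀ S) (bendPairs g)) :
    ∃ lam : S, IsUnit lam ∧ g = lam • f := by
  have hsub1 : ∀ k, g k ≠ 0 → f k ≠ 0 := suppSub f g h
  have hsub2 : ∀ k, f k ≠ 0 → g k ≠ 0 := suppSub g f h.symm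
  obtain ⟨i₀, hi₀⟩ := Finsupp.support_nonempty_iff.2 hf
  have hfi₀ : f i₀ ≠ 0 := Finsupp.mem_support_iff.1 hi₀
  have hgi₀ : g i₀ ≠ 0 := hsub2 i₀ hfi₀
  obtain ⟨fi₀', hfi₀'⟩ := hinv (f i₀) hfi₀
  obtain ⟨gi₀', hgi₀'⟩ := hinv (g i₀) hgi₀
  refine ⟨g i₀ * fi₀', IsUnit.of_mul_eq_one (a := g i₀ * fi₀') (f i₀ * gi₀') ?_, ?_⟩
  · have : g i₀ * fi₀' * (f i₀ * gi₀') = (f i₀ * fi₀') * (g i₀ * gi₀') := by ring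
    rw [this, hfi₀', hgi₀', mul_one]
  · ext m
    rw [Finsupp.smul_apply, smul_eq_mul]
    by_cases hfm : f m = 0
    · have hgm : g m = 0 := by
        by_contra hgm
        exact hsub1 m hgm hfm
      rw [hgm, hfm, mul_zero]
    · by_cases hm : m = i₀
      · subst hm
        calc g m = g m * (f m * fi₀') := by rw [hfi₀', mul_one]
        _ = g m * fi₀' * f m := by ring
      · obtain ⟨fm', hfm'⟩ := hinv (f m) hfm
        have hr := ratioEq hidem f g h m i₀ hm hfm hfi₀ (hsub2 m hfm) hgi₀ fm' fi₀' hfm' hfi₀'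
        calc g m = f m * (fm' * g m) := by
              rw [← mul_assoc, hfm', one_mul]
        _ = f m * (fi₀' * g i₀) := by rw [hr]
        _ = g i₀ * fi₀' * f m := by ring
end

section
/- Let ν : R → S be a valuation from a commutative ring to an idempotent semiring, and A an integral commutative monoid (multiplication by any element is injective). For an ideal I of the monoid ring R[A], the S-submodule trop(I) of S[A] generated by {ν(f) : f ∈ I} (coefficient-wise valuation) is an ideal of S[A]. -/
lemma single_one_mul_eq_mapDomain {k A : Type*} [Semiring k] [Mul A] (a : A)
    (f : MonoidAlgebra k A) :
    ((MonoidAlgebra.single a (1 : k)) * f).coeff = Finsupp.mapDomain (a * ·) f.coeff := by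
  rw [MonoidAlgebra.mul_def, Finsupp.mapDomain]
  rw [MonoidAlgebra.coeff_single, Finsupp.sum_single_index]
  · simp [MonoidAlgebra.coeff_finsuppSum]
  · simp [Finsupp.sum]

/-- Let `ν : R → S` be a valuation from a commutative ring to an idempotent
commutative semiring, and `A` an integral commutative monoid (multiplication by any
element is injective on monomials).  For an ideal `I ⊆ R[A]`, the `S`-submodule
`trop(I) ⊆ S[A]` spanned by the coefficientwise valuations `ν(f)`, `f ∈ I`, is an
ideal of the monoid semiring `S[A]`. -/
theorem stmt17 (R S A : Type*) [CommRing R] [CommSemiring S] [CommMonoid A]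
    (hidem : ∀ s : S, s + s = s)
    (hint : ∀ x a b : A, x * a = x * b → a = b)
    (ν : R → S) (h0 : ν 0 = 0) (h1 : ν 1 = 1) (hneg : ν (-1) = 1)
    (hmul : ∀ a b : R, ν (a * b) = ν a * ν b)
    (hsub : ∀ a b : R, ν (a + b) + ν a + ν b = ν a + ν b)
    (I : Ideal (MonoidAlgebra R A))
    (T : Submodule S (MonoidAlgebra S A))
    (hT : T = Submodule.span S
      ((fun f : MonoidAlgebra R A => (MonoidAlgebra.ofCoeff (Finsupp.mapRange ν h0 f.coeff) : MonoidAlgebra S A)) '' I)) :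
    ∀ g : MonoidAlgebra S A, ∀ h ∈ T, g * h ∈ T := by
  subst hT
  -- Key: for a monomial `single a 1` and `f ∈ I`,
  -- `single a 1 * mapRange ν f = mapRange ν (single a 1 * f)`.
  set F : MonoidAlgebra R A → MonoidAlgebra S A :=
    fun f => (MonoidAlgebra.ofCoeff (Finsupp.mapRange ν h0 f.coeff) : MonoidAlgebra S A) with hF
  have key : ∀ (a : A) (f : MonoidAlgebra R A),
      (MonoidAlgebra.single a (1 : S)) * F f = F ((MonoidAlgebra.single a (1 : R)) * f) := by
    intro a f
    simp only [hF]
    apply MonoidAlgebra.coeff_injective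
    rw [MonoidAlgebra.coeff_ofCoeff, single_one_mul_eq_mapDomain, single_one_mul_eq_mapDomain,
      MonoidAlgebra.coeff_ofCoeff]
    have hinj : Function.Injective (a * ·) := fun x y h => hint a x y h
    rw [← Function.Embedding.coeFn_mk (a * ·) hinj, ← Finsupp.embDomain_eq_mapDomain,
      ← Finsupp.embDomain_eq_mapDomain, Finsupp.embDomain_mapRange]
  intro g h hh
  induction hh using Submodule.span_induction with
  | mem x hx =>
    obtain ⟨f, hf, rfl⟩ := hx
    -- induct on g
    induction g using MonoidAlgebra.induction with
    | zero => simp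
    | single_add a s g' _ _ ih =>
      rw [add_mul]
      refine Submodule.add_mem _ ?_ ih
      have : (MonoidAlgebra.single a s : MonoidAlgebra S A)
          = s • MonoidAlgebra.single a (1 : S) := by
        rw [MonoidAlgebra.smul_single', mul_one]
      rw [this, smul_mul_assoc]
      refine Submodule.smul_mem _ _ ?_
      rw [key]
      exact Submodule.subset_span ⟨_, I.mul_mem_left _ hf, rfl⟩
  | zero => simp
  | add x y _ _ hx hy => rw [mul_add]; exact Submodule.add_mem _ hx hy
  | smul s x _ hx => rw [mul_smul_comm]; exact Submodule.smul_mem _ _ hx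
end

section
/- Let ν : k → S be a valued field with S an idempotent semiring, and let f = ax + by ∈ k[x, y] be a binomial in two variables with a, b ∈ k nonzero. For every g ∈ k[x,y] written with support {z₁,…,z_n} forming a chain zᵢ·x = z_{i+1}·y of monomials, the bend relations of ν(fg) are implied by the single relation ν(a)x ∼ ν(b)y together with the semiring structure of S[x,y]; in particular the semiring congruence generated by B(ν(f)) contains B(ν(fg)). -/
/-- The bend relations of a tropical polynomial `h ∈ S[x,y]` (modelled as an element
of the additive monoid algebra over the monomial monoid `Fin 2 →₀ ℕ`). -/
def bendRel {S : Type*} [CommSemiring S] (h : AddMonoidAlgebra S (Fin 2 →₀ ℕ)) :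
    AddMonoidAlgebra S (Fin 2 →₀ ℕ) → AddMonoidAlgebra S (Fin 2 →₀ ℕ) → Prop :=
  fun u v => ∃ m ∈ h.coeff.support, u = h ∧ v = AddMonoidAlgebra.ofCoeff (Finsupp.erase m h.coeff : (Fin 2 →₀ ℕ) →₀ S)

/-- The monomial `x^i y^r`. -/
noncomputable def stmt18W (i r : ℕ) : Fin 2 →₀ ℕ := Finsupp.single 0 i + Finsupp.single 1 r

lemma stmt18W_apply0 (i r : ℕ) : stmt18W i r 0 = i := by
  simp [stmt18W, Finsupp.single_apply]

lemma stmt18W_apply1 (i r : ℕ) : stmt18W i r 1 = r := by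
  simp [stmt18W, Finsupp.single_apply]

lemma stmt18W_eq (z : Fin 2 →₀ ℕ) : z = stmt18W (z 0) (z 1) := by
  ext x; fin_cases x
  · exact (stmt18W_apply0 _ _).symm
  · exact (stmt18W_apply1 _ _).symm

lemma stmt18W_addX (i r : ℕ) :
    stmt18W i r + Finsupp.single 0 1 = stmt18W (i + 1) r := by
  ext x; fin_cases x <;> simp [stmt18W, Finsupp.single_apply]

lemma stmt18W_addY (i r : ℕ) :
    stmt18W i r + Finsupp.single 1 1 = stmt18W i (r + 1) := by
  ext x; fin_cases x <;> simp [stmt18W, Finsupp.single_apply]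

lemma stmt18W_Xiff (i r : ℕ) (c : Fin 2 →₀ ℕ) :
    Finsupp.single 0 1 + c = stmt18W (i + 1) r ↔ c = stmt18W i r := by
  constructor
  · intro h
    have h0 := congrArg (fun p : Fin 2 →₀ ℕ => p 0) h
    have h1 := congrArg (fun p : Fin 2 →₀ ℕ => p 1) h
    simp [stmt18W_apply0, stmt18W_apply1, Finsupp.single_apply] at h0 h1
    rw [stmt18W_eq c]
    have hc0 : c 0 = i := by omega
    rw [hc0, h1]
  · rintro rfl
    rw [add_comm]; exact stmt18W_addX i r
lemma stmt18W_Yiff (i r : ℕ) (c : Fin 2 →₀ ℕ) :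
    Finsupp.single 1 1 + c = stmt18W i (r + 1) ↔ c = stmt18W i r := by
  constructor
  · intro h
    have h0 := congrArg (fun p : Fin 2 →₀ ℕ => p 0) h
    have h1 := congrArg (fun p : Fin 2 →₀ ℕ => p 1) h
    simp [stmt18W_apply0, stmt18W_apply1, Finsupp.single_apply] at h0 h1
    rw [stmt18W_eq c]
    have hc1 : c 1 = r := by omega
    rw [hc1, h0]
  · rintro rfl
    rw [add_comm]; exact stmt18W_addY i r

lemma stmt18W_Xnot (r : ℕ) : ¬ ∃ d, stmt18W 0 r = Finsupp.single 0 1 + d := by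
  rintro ⟨d, hd⟩
  have h0 := congrArg (fun p : Fin 2 →₀ ℕ => p 0) hd
  simp [stmt18W_apply0, Finsupp.single_apply] at h0
  omega

lemma stmt18W_Ynot (i : ℕ) : ¬ ∃ d, stmt18W i 0 = Finsupp.single 1 1 + d := by
  rintro ⟨d, hd⟩
  have h1 := congrArg (fun p : Fin 2 →₀ ℕ => p 1) hd
  simp [stmt18W_apply1, Finsupp.single_apply] at h1
  omega

lemma stmt18W_ne {i r i' r' : ℕ} (h : i ≠ i') : stmt18W i r ≠ stmt18W i' r' := by
  intro he
  exact h (by rw [← stmt18W_apply0 i r, he, stmt18W_apply0])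

/-- Let `ν : k → S` be a valued field with `S` a totally ordered idempotent
commutative semiring, and let `f = a·x + b·y` be a binomial with `a, b ≠ 0`.
For every `g ∈ k[x,y]`, all the bend relations of `ν(f·g)` lie in the semiring
congruence generated by the bend relations of `ν(f)`; i.e. `⟨B(ν f)⟩ ⊇ B(ν (f g))`
(Proposition: a binomial is a scheme-theoretic tropical basis for the principal
ideal it generates). -/
theorem stmt18 (k S : Type*) [Field k] [CommSemiring S]
    (hidem : ∀ s : S, s + s = s) (htot : ∀ a b : S, a + b = a ∨ a + b = b)
    (ν : k → S) (h0 : ν 0 = 0) (h1 : ν 1 = 1) (hneg : ν (-1) = 1)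
    (hmul : ∀ a b : k, ν (a * b) = ν a * ν b)
    (hsub : ∀ a b : k, ν (a + b) + ν a + ν b = ν a + ν b)
    (a b : k) (ha : a ≠ 0) (hb : b ≠ 0)
    (f : AddMonoidAlgebra k (Fin 2 →₀ ℕ))
    (hf : f = AddMonoidAlgebra.ofCoeff (Finsupp.single (Finsupp.single (0 : Fin 2) 1) a
            + Finsupp.single (Finsupp.single (1 : Fin 2) 1) b)) :
    ∀ g : AddMonoidAlgebra k (Fin 2 →₀ ℕ),
      ∀ m ∈ (Finsupp.mapRange ν h0 (f * g).coeff).support,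
        ringConGen (bendRel (AddMonoidAlgebra.ofCoeff (Finsupp.mapRange ν h0 f.coeff) : AddMonoidAlgebra S (Fin 2 →₀ ℕ)))
          (AddMonoidAlgebra.ofCoeff (Finsupp.mapRange ν h0 (f * g).coeff))
          (AddMonoidAlgebra.ofCoeff (Finsupp.erase m (Finsupp.mapRange ν h0 (f * g).coeff))) := by
  intro g m hm
  rcases subsingleton_or_nontrivial S with hS | hS
  · exact absurd (Subsingleton.elim _ _) (Finsupp.mem_support_iff.mp hm)
  classical
  -- abbreviations
  set X : Fin 2 →₀ ℕ := Finsupp.single 0 1 with hXdef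
  set Y : Fin 2 →₀ ℕ := Finsupp.single 1 1 with hYdef
  set T : AddMonoidAlgebra S (Fin 2 →₀ ℕ) := AddMonoidAlgebra.ofCoeff (Finsupp.mapRange ν h0 f.coeff) with hTdef
  set F : AddMonoidAlgebra S (Fin 2 →₀ ℕ) := AddMonoidAlgebra.ofCoeff (Finsupp.mapRange ν h0 (f * g).coeff) with hFdef
  set E : AddMonoidAlgebra S (Fin 2 →₀ ℕ) := AddMonoidAlgebra.ofCoeff (Finsupp.erase m F.coeff) with hEdef
  set C : RingCon (AddMonoidAlgebra S (Fin 2 →₀ ℕ)) := ringConGen (bendRel T) with hCdef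
  show C F E
  -- basic facts about S order
  have hle_trans : ∀ s t u : S, s + t = t → t + u = u → s + u = u := by
    intro s t u h1' h2'
    rw [← h2', ← add_assoc, h1']
  -- nonvanishing of ν on nonzero elements
  have hν : ∀ c : k, c ≠ 0 → ν c ≠ 0 := by
    intro c hc hcon
    have := hmul c c⁻¹
    rw [mul_inv_cancel₀ hc, h1, hcon, zero_mul] at this
    exact one_ne_zero this
  have hXY : X ≠ Y := by
    intro h
    have := congrArg (fun p : Fin 2 →₀ ℕ => p 0) h
    simp [hXdef, hYdef, Finsupp.single_apply] at this
  -- description of T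
  have hT : ∀ z, T.coeff z = (Finsupp.single X (ν a) + Finsupp.single Y (ν b) :
      (Fin 2 →₀ ℕ) →₀ S) z := by
    intro z
    rw [hTdef, AddMonoidAlgebra.coeff_ofCoeff, Finsupp.mapRange_apply, hf,
      AddMonoidAlgebra.coeff_ofCoeff, Finsupp.add_apply, Finsupp.add_apply,
      Finsupp.single_apply, Finsupp.single_apply, Finsupp.single_apply, Finsupp.single_apply]
    by_cases h1z : X = z <;> by_cases h2z : Y = z
    · exact absurd (h1z.trans h2z.symm) hXY
    · simp [h1z, h2z]
    · simp [h1z, h2z]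
    · simp [h1z, h2z, h0]
  have hTX : T.coeff X = ν a := by
    rw [hT, Finsupp.add_apply, Finsupp.single_eq_same, Finsupp.single_eq_of_ne' hXY.symm]
    exact add_zero _
  have hTY : T.coeff Y = ν b := by
    rw [hT, Finsupp.add_apply, Finsupp.single_eq_of_ne' hXY, Finsupp.single_eq_same]
    exact zero_add _
  -- bend relations of T
  have hbase : ∀ z ∈ T.coeff.support, C T (AddMonoidAlgebra.ofCoeff (Finsupp.erase z T.coeff)) := by
    intro z hz
    exact RingConGen.Rel.of _ _ ⟨z, hz, rfl, rfl⟩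
  have hXmem : X ∈ T.coeff.support := Finsupp.mem_support_iff.mpr (by rw [hTX]; exact hν a ha)
  have hYmem : Y ∈ T.coeff.support := Finsupp.mem_support_iff.mpr (by rw [hTY]; exact hν b hb)
  have heX : AddMonoidAlgebra.ofCoeff (Finsupp.erase X T.coeff) = (AddMonoidAlgebra.single Y (ν b) : AddMonoidAlgebra S (Fin 2 →₀ ℕ)) := by
    refine AddMonoidAlgebra.ext ?_
    rw [AddMonoidAlgebra.coeff_ofCoeff, AddMonoidAlgebra.coeff_single]
    ext z
    by_cases hz : z = X
    · subst hz
      rw [Finsupp.erase_same, Finsupp.single_eq_of_ne' hXY.symm]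
    · rw [Finsupp.erase_ne hz, hT, Finsupp.add_apply,
        Finsupp.single_eq_of_ne' (fun h => hz h.symm), zero_add]
  have heY : AddMonoidAlgebra.ofCoeff (Finsupp.erase Y T.coeff) = (AddMonoidAlgebra.single X (ν a) : AddMonoidAlgebra S (Fin 2 →₀ ℕ)) := by
    refine AddMonoidAlgebra.ext ?_
    rw [AddMonoidAlgebra.coeff_ofCoeff, AddMonoidAlgebra.coeff_single]
    ext z
    by_cases hz : z = Y
    · subst hz
      rw [Finsupp.erase_same, Finsupp.single_eq_of_ne' hXY]
    · rw [Finsupp.erase_ne hz, hT, Finsupp.add_apply,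
        Finsupp.single_eq_of_ne' (fun h => hz h.symm), add_zero]
  have key0 : C (AddMonoidAlgebra.single X (ν a)) (AddMonoidAlgebra.single Y (ν b)) := by
    have k1 := hbase Y hYmem
    have k2 := hbase X hXmem
    rw [heY] at k1
    rw [heX] at k2
    exact C.trans (C.symm k1) k2
  -- the shift relation
  have shift : ∀ (s : S) (i r : ℕ),
      C (AddMonoidAlgebra.single (stmt18W (i + 1) r) (ν a * s))
        (AddMonoidAlgebra.single (stmt18W i (r + 1)) (ν b * s)) := by
    intro s i r
    have := C.mul key0 (C.refl (AddMonoidAlgebra.single (stmt18W i r) s : AddMonoidAlgebra S (Fin 2 →₀ ℕ)))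
    have hX' : stmt18W (i + 1) r = X + stmt18W i r := by
      rw [hXdef, add_comm (Finsupp.single (0 : Fin 2) 1) (stmt18W i r)]
      exact (stmt18W_addX i r).symm
    have hY' : stmt18W i (r + 1) = Y + stmt18W i r := by
      rw [hYdef, add_comm (Finsupp.single (1 : Fin 2) 1) (stmt18W i r)]
      exact (stmt18W_addY i r).symm
    have e1 : AddMonoidAlgebra.single X (ν a) *
        AddMonoidAlgebra.single (stmt18W i r) s
        = AddMonoidAlgebra.single (stmt18W (i + 1) r) (ν a * s) := by
      rw [hX']
      exact AddMonoidAlgebra.single_mul_single _ _ _ _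
    have e2 : AddMonoidAlgebra.single Y (ν b) *
        AddMonoidAlgebra.single (stmt18W i r) s
        = AddMonoidAlgebra.single (stmt18W i (r + 1)) (ν b * s) := by
      rw [hY']
      exact AddMonoidAlgebra.single_mul_single _ _ _ _
    rw [e1, e2] at this
    exact this
  -- coefficients of f * g
  have hsplit : f * g = AddMonoidAlgebra.single X a * g + AddMonoidAlgebra.single Y b * g := by
    rw [hf, AddMonoidAlgebra.ofCoeff_add, AddMonoidAlgebra.ofCoeff_single,
      AddMonoidAlgebra.ofCoeff_single]; exact add_mul _ _ _
  have M1 : ∀ i r, (f * g).coeff (stmt18W (i + 1) (r + 1))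
      = a * g.coeff (stmt18W i (r + 1)) + b * g.coeff (stmt18W (i + 1) r) := by
    intro i r
    rw [hsplit, AddMonoidAlgebra.coeff_add, Finsupp.add_apply,
      AddMonoidAlgebra.coeff_single_mul_eq_mul_coeff _ (fun c _ => stmt18W_Xiff i (r + 1) c),
      AddMonoidAlgebra.coeff_single_mul_eq_mul_coeff _ (fun c _ => stmt18W_Yiff (i + 1) r c)]
  have M2 : ∀ i, (f * g).coeff (stmt18W (i + 1) 0) = a * g.coeff (stmt18W i 0) := by
    intro i
    rw [hsplit, AddMonoidAlgebra.coeff_add, Finsupp.add_apply,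
      AddMonoidAlgebra.coeff_single_mul_eq_mul_coeff _ (fun c _ => stmt18W_Xiff i 0 c),
      AddMonoidAlgebra.coeff_single_mul_of_forall_add_ne b g (fun d hd => stmt18W_Ynot (i + 1) ⟨d, hd.symm⟩), add_zero]
  have M3 : ∀ r, (f * g).coeff (stmt18W 0 (r + 1)) = b * g.coeff (stmt18W 0 r) := by
    intro r
    rw [hsplit, AddMonoidAlgebra.coeff_add, Finsupp.add_apply,
      AddMonoidAlgebra.coeff_single_mul_of_forall_add_ne a g (fun d hd => stmt18W_Xnot (r + 1) ⟨d, hd.symm⟩),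
      AddMonoidAlgebra.coeff_single_mul_eq_mul_coeff _ (fun c _ => stmt18W_Yiff 0 r c), zero_add]
  have M4 : (f * g).coeff (stmt18W 0 0) = 0 := by
    rw [hsplit, AddMonoidAlgebra.coeff_add, Finsupp.add_apply,
      AddMonoidAlgebra.coeff_single_mul_of_forall_add_ne a g (fun d hd => stmt18W_Xnot 0 ⟨d, hd.symm⟩),
      AddMonoidAlgebra.coeff_single_mul_of_forall_add_ne b g (fun d hd => stmt18W_Ynot 0 ⟨d, hd.symm⟩), add_zero]
  have hFap : ∀ z, F.coeff z = ν ((f * g).coeff z) := by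
    intro z
    rw [hFdef]
    exact Finsupp.mapRange_apply (hf := h0)
  -- absorption
  have habs : ∀ (i r : ℕ) (s : S), stmt18W i r ≠ m → F.coeff (stmt18W i r) + s = F.coeff (stmt18W i r) →
      (E + AddMonoidAlgebra.single (stmt18W i r) s : AddMonoidAlgebra S (Fin 2 →₀ ℕ)) = E := by
    intro i r s hzm hab
    refine AddMonoidAlgebra.ext ?_
    ext x
    rw [AddMonoidAlgebra.coeff_add, Finsupp.add_apply, AddMonoidAlgebra.coeff_single, Finsupp.single_apply]
    by_cases hx : stmt18W i r = x
    · subst hx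
      rw [if_pos rfl, hEdef, AddMonoidAlgebra.coeff_ofCoeff, Finsupp.erase_ne hzm, hab]
    · rw [if_neg hx, add_zero]
  -- merging two singles at the same point
  have hmerge : ∀ (z : Fin 2 →₀ ℕ) (s t : S),
      (E + AddMonoidAlgebra.single z s + AddMonoidAlgebra.single z t : AddMonoidAlgebra S (Fin 2 →₀ ℕ))
        = E + AddMonoidAlgebra.single z (s + t) := by
    intro z s t
    rw [add_assoc]
    congr 1
    exact (AddMonoidAlgebra.single_add z s t).symm
  -- the trick : from C E (E + single z t) and s + t = t, get C E (E + single z s)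
  have htrick : ∀ (z : Fin 2 →₀ ℕ) (s t : S), s + t = t →
      C E (E + AddMonoidAlgebra.single z t) → C E (E + AddMonoidAlgebra.single z s) := by
    intro z s t hst hCt
    have h2 : C (E + AddMonoidAlgebra.single z s) ((E + AddMonoidAlgebra.single z t) + AddMonoidAlgebra.single z s) :=
      C.add hCt (C.refl _)
    have h3 : ((E + AddMonoidAlgebra.single z t) + AddMonoidAlgebra.single z s :
        AddMonoidAlgebra S (Fin 2 →₀ ℕ)) = E + AddMonoidAlgebra.single z t := by
      rw [hmerge, add_comm t s, hst]
    rw [h3] at h2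
    exact C.trans hCt (C.symm h2)
  -- ν of negation
  have hνneg : ∀ c : k, ν (-c) = ν c := by
    intro c
    rw [show -c = -1 * c by ring, hmul, hneg, one_mul]
  -- ultrametric-type inequality : ν p ≤ ν (p + q) + ν q
  have hultra : ∀ p q : k, ν p + (ν (p + q) + ν q) = ν (p + q) + ν q := by
    intro p q
    have := hsub (p + q) (-q)
    rw [add_neg_cancel_right, hνneg] at this
    rw [← add_assoc]
    exact this
  -- dichotomy : ν p ≤ ν (p+q) or ν p ≤ ν q
  have hdich : ∀ p q : k, (ν p + ν (p + q) = ν (p + q)) ∨ (ν p + ν q = ν q) := by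
    intro p q
    rcases htot (ν (p + q)) (ν q) with h | h
    · left
      have := hultra p q
      rw [h] at this
      exact this
    · right
      have := hultra p q
      rw [h] at this
      exact this
  obtain ⟨j, r0, hmj⟩ : ∃ j r0, m = stmt18W j r0 := ⟨m 0, m 1, stmt18W_eq m⟩
  -- the upward carrying chain
  have U : ∀ r : ℕ, ∀ i : ℕ, i + (r + 1) = j + r0 → j ≤ i →
      C E (E + AddMonoidAlgebra.single (stmt18W i (r + 1)) (ν b * ν (g.coeff (stmt18W i r)))) := by
    intro r
    induction r with
    | zero =>
      intro i hir hji
      have hne : stmt18W (i + 1) 0 ≠ m := by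
        rw [hmj]; exact stmt18W_ne (by omega)
      have hab : F.coeff (stmt18W (i + 1) 0) + ν a * ν (g.coeff (stmt18W i 0)) = F.coeff (stmt18W (i + 1) 0) := by
        rw [hFap, M2, hmul]
        exact hidem _
      have h2 : C (E + AddMonoidAlgebra.single (stmt18W i 1) (ν b * ν (g.coeff (stmt18W i 0))))
          (E + AddMonoidAlgebra.single (stmt18W (i + 1) 0) (ν a * ν (g.coeff (stmt18W i 0)))) :=
        C.add (C.refl E) (C.symm (shift (ν (g.coeff (stmt18W i 0))) i 0))
      rw [habs (i + 1) 0 _ hne hab] at h2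
      exact C.symm h2
    | succ r ih =>
      intro i hir hji
      -- carried mass at stmt18W i (r+2); shift it to stmt18W (i+1) (r+1)
      have h2 : C (E + AddMonoidAlgebra.single (stmt18W i (r + 2)) (ν b * ν (g.coeff (stmt18W i (r + 1)))))
          (E + AddMonoidAlgebra.single (stmt18W (i + 1) (r + 1)) (ν a * ν (g.coeff (stmt18W i (r + 1))))) :=
        C.add (C.refl E) (C.symm (shift (ν (g.coeff (stmt18W i (r + 1)))) i (r + 1)))
      have hgoal : C E (E + AddMonoidAlgebra.single (stmt18W (i + 1) (r + 1))
          (ν a * ν (g.coeff (stmt18W i (r + 1))))) := by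
        have hne : stmt18W (i + 1) (r + 1) ≠ m := by
          rw [hmj]; exact stmt18W_ne (by omega)
        rcases hdich (a * g.coeff (stmt18W i (r + 1))) (b * g.coeff (stmt18W (i + 1) r)) with h | h
        · -- absorbed by the coefficient of F
          have hab : F.coeff (stmt18W (i + 1) (r + 1)) + ν a * ν (g.coeff (stmt18W i (r + 1)))
              = F.coeff (stmt18W (i + 1) (r + 1)) := by
            rw [hFap, M1, ← hmul]
            rw [add_comm] at h
            exact h
          have h4 := habs (i + 1) (r + 1) _ hne hab
          refine C.symm ?_
          rw [h4]
          exact C.refl E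
        · -- dominated by the next carried mass; use the induction hypothesis
          have ihh := ih (i + 1) (by omega) (by omega)
          rw [hmul, hmul] at h
          exact htrick _ _ _ h ihh
      exact C.trans hgoal (C.symm h2)
  -- the downward carrying chain
  have D : ∀ i : ℕ, ∀ r : ℕ, (i + 1) + r = j + r0 → i + 1 ≤ j →
      C E (E + AddMonoidAlgebra.single (stmt18W (i + 1) r) (ν a * ν (g.coeff (stmt18W i r)))) := by
    intro i
    induction i with
    | zero =>
      intro r hir hji
      have hne : stmt18W 0 (r + 1) ≠ m := by
        rw [hmj]; exact stmt18W_ne (by omega)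
      have hab : F.coeff (stmt18W 0 (r + 1)) + ν b * ν (g.coeff (stmt18W 0 r)) = F.coeff (stmt18W 0 (r + 1)) := by
        rw [hFap, M3, hmul]
        exact hidem _
      have h2 : C (E + AddMonoidAlgebra.single (stmt18W 1 r) (ν a * ν (g.coeff (stmt18W 0 r))))
          (E + AddMonoidAlgebra.single (stmt18W 0 (r + 1)) (ν b * ν (g.coeff (stmt18W 0 r)))) :=
        C.add (C.refl E) (shift (ν (g.coeff (stmt18W 0 r))) 0 r)
      rw [habs 0 (r + 1) _ hne hab] at h2
      exact C.symm h2
    | succ i ih =>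
      intro r hir hji
      have h2 : C (E + AddMonoidAlgebra.single (stmt18W (i + 2) r) (ν a * ν (g.coeff (stmt18W (i + 1) r))))
          (E + AddMonoidAlgebra.single (stmt18W (i + 1) (r + 1)) (ν b * ν (g.coeff (stmt18W (i + 1) r)))) :=
        C.add (C.refl E) (shift (ν (g.coeff (stmt18W (i + 1) r))) (i + 1) r)
      have hgoal : C E (E + AddMonoidAlgebra.single (stmt18W (i + 1) (r + 1))
          (ν b * ν (g.coeff (stmt18W (i + 1) r)))) := by
        have hne : stmt18W (i + 1) (r + 1) ≠ m := by
          rw [hmj]; exact stmt18W_ne (by omega)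
        rcases hdich (b * g.coeff (stmt18W (i + 1) r)) (a * g.coeff (stmt18W i (r + 1))) with h | h
        · have hab : F.coeff (stmt18W (i + 1) (r + 1)) + ν b * ν (g.coeff (stmt18W (i + 1) r))
              = F.coeff (stmt18W (i + 1) (r + 1)) := by
            rw [hFap, M1, ← hmul]
            rw [add_comm (b * g.coeff (stmt18W (i + 1) r)) (a * g.coeff (stmt18W i (r + 1)))] at h
            rw [add_comm (ν (b * g.coeff (stmt18W (i + 1) r)))] at h
            exact h
          have h4 := habs (i + 1) (r + 1) _ hne hab
          refine C.symm ?_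
          rw [h4]
          exact C.refl E
        · have ihh := ih (r + 1) (by omega) (by omega)
          rw [hmul, hmul] at h
          exact htrick _ _ _ h ihh
      exact C.trans hgoal (C.symm h2)
  -- final assembly
  have hFE : F = E + AddMonoidAlgebra.single m (F.coeff m) := by
    rw [hEdef]
    exact (AddMonoidAlgebra.erase_add_single m F).symm
  have hFm : F.coeff m = ν ((f * g).coeff m) := hFap m
  have hmW : (stmt18W j r0 : Fin 2 →₀ ℕ) = m := hmj.symm
  have hFm0 : F.coeff m ≠ 0 := Finsupp.mem_support_iff.mp hm
  -- from C E (E + single m t) with F.coeff m + t = t, conclude C F E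
  have hfinish : ∀ t : S, F.coeff m + t = t → C E (E + AddMonoidAlgebra.single m t) → C F E := by
    intro t hFt hCt
    have h2 : C (F) ((E + AddMonoidAlgebra.single m t) + AddMonoidAlgebra.single m (F.coeff m)) := by
      have h2' := C.add hCt (C.refl (AddMonoidAlgebra.single m (F.coeff m)))
      rw [← hFE] at h2'
      exact h2'
    have h3 : ((E + AddMonoidAlgebra.single m t) + AddMonoidAlgebra.single m (F.coeff m) :
        AddMonoidAlgebra S (Fin 2 →₀ ℕ)) = E + AddMonoidAlgebra.single m t := by
      rw [hmerge, add_comm t (F.coeff m), hFt]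
    rw [h3] at h2
    exact C.trans h2 (C.symm hCt)
  have hsubadd : ∀ p q : k, ν (p + q) + (ν p + ν q) = ν p + ν q := by
    intro p q
    rw [← add_assoc]
    exact hsub p q
  rcases Nat.eq_zero_or_pos j with hj0 | hjpos
  · rcases Nat.eq_zero_or_pos r0 with hr00 | hr0pos
    · exfalso
      apply hFm0
      rw [hFm, hmj, hj0, hr00, M4, h0]
    · -- j = 0, r0 ≥ 1 : use the upward chain at its start
      obtain ⟨r', rfl⟩ : ∃ r', r0 = r' + 1 := ⟨r0 - 1, by omega⟩
      have hm' : stmt18W 0 (r' + 1) = m := by rw [hmj, hj0]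
      have ht : F.coeff m + ν b * ν (g.coeff (stmt18W 0 r')) = ν b * ν (g.coeff (stmt18W 0 r')) := by
        rw [← hm', hFap, M3, hmul]
        exact hidem _
      have hU := U r' 0 (by omega) (by omega)
      rw [hm'] at hU
      exact hfinish _ ht hU
  · -- j ≥ 1
    obtain ⟨j', rfl⟩ : ∃ j', j = j' + 1 := ⟨j - 1, by omega⟩
    rcases Nat.eq_zero_or_pos r0 with hr00 | hr0pos
    · have hm' : stmt18W (j' + 1) 0 = m := by rw [hmj, hr00]
      have ht : F.coeff m + ν a * ν (g.coeff (stmt18W j' 0)) = ν a * ν (g.coeff (stmt18W j' 0)) := by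
        rw [← hm', hFap, M2, hmul]
        exact hidem _
      have hD := D j' 0 (by omega) (by omega)
      rw [hm'] at hD
      exact hfinish _ ht hD
    · obtain ⟨r', rfl⟩ : ∃ r', r0 = r' + 1 := ⟨r0 - 1, by omega⟩
      have hm' : stmt18W (j' + 1) (r' + 1) = m := hmj.symm
      rcases htot (ν (a * g.coeff (stmt18W j' (r' + 1)))) (ν (b * g.coeff (stmt18W (j' + 1) r'))) with h | h
      · -- dominated by the a-term : use the downward chain
        have ht : F.coeff m + ν a * ν (g.coeff (stmt18W j' (r' + 1))) = ν a * ν (g.coeff (stmt18W j' (r' + 1))) := by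
          rw [← hm', hFap, M1, ← hmul]
          have hs := hsubadd (a * g.coeff (stmt18W j' (r' + 1))) (b * g.coeff (stmt18W (j' + 1) r'))
          rw [h] at hs
          exact hs
        have hD := D j' (r' + 1) (by omega) (by omega)
        rw [hm'] at hD
        exact hfinish _ ht hD
      · -- dominated by the b-term : use the upward chain
        have ht : F.coeff m + ν b * ν (g.coeff (stmt18W (j' + 1) r')) = ν b * ν (g.coeff (stmt18W (j' + 1) r')) := by
          rw [← hm', hFap, M1, ← hmul]
          have hs := hsubadd (a * g.coeff (stmt18W j' (r' + 1))) (b * g.coeff (stmt18W (j' + 1) r'))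
          rw [h] at hs
          exact hs
        have hU := U r' (j' + 1) (by omega) (by omega)
        rw [hm'] at hU
        exact hfinish _ ht hU
end
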